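/- A class K of finite structures is a Fraïssé class (an age class with the amalgamation property) if and only if K is the age of some Fraïssé structure (a countably infinite, locally finite, ultrahomogeneous structure). -/

import Mathlib

open FirstOrder CategoryTheory

universe u v

/-- A structure is locally finite if it is the union of an increasing chain of finite
substructures. -/
def IsLocallyFinite (L : FirstOrder.Language.{u, v}) (M : Type*) [L.Structure M] : Prop :=
  ∃ A : ℕ → L.Substructure M, Monotone A ∧ (∀ n, ((A n : Set M)).Finite) ∧
    (⋃ n, ((A n : Set M))) = Set.univ

/-- `M` is ultrahomogeneous: every isomorphism between finite substructures of `M`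
extends to an automorphism of `M`. -/
def IsUltrahomog (L : FirstOrder.Language.{u, v}) (M : Type*) [L.Structure M] : Prop :=
  ∀ S T : L.Substructure M, (S : Set M).Finite → (T : Set M).Finite →
    ∀ f : S ≃[L] T, ∃ g : M ≃[L] M, ∀ x : S, g x = f x

/-- `K` is an age class. -/
def IsAgeClass (L : FirstOrder.Language.{u, v}) (K : Set (Bundled.{0} L.Structure)) : Prop :=
  (∀ M ∈ K, Finite M) ∧
  (∀ M ∈ K, ∀ N : Bundled.{0} L.Structure, Nonempty (M ≃[L] N) → N ∈ K) ∧
  (∃ J : Set (Bundled.{0} L.Structure), J.Countable ∧ J ⊆ K ∧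
    ∀ M ∈ K, ∃ N ∈ J, Nonempty (N ≃[L] M)) ∧
  (∀ n : ℕ, ∃ M ∈ K, n ≤ Nat.card M) ∧
  (∀ M ∈ K, ∀ S : L.Substructure M, (⟨S, inferInstance⟩ : Bundled.{0} L.Structure) ∈ K) ∧
  (∀ M ∈ K, ∀ N ∈ K, ∃ P ∈ K, Nonempty (M ↪[L] P) ∧ Nonempty (N ↪[L] P))

/-- `K` has the amalgamation property. -/
def HasAP (L : FirstOrder.Language.{u, v}) (K : Set (Bundled.{0} L.Structure)) : Prop :=
  ∀ A ∈ K, ∀ B ∈ K, ∀ C ∈ K, ∀ (f : A ↪[L] B) (g : A ↪[L] C),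
    ∃ D ∈ K, ∃ (r : B ↪[L] D) (s : C ↪[L] D), r.comp f = s.comp g

namespace FraisseAux
open FirstOrder.Language Set
variable {L : FirstOrder.Language.{u, v}}

theorem finite_subset_chain {M : Type*} [L.Structure M] {A : ℕ → L.Substructure M}
    (mono : Monotone A) (cover : (⋃ n, ((A n : Set M))) = Set.univ)
    {X : Set M} (hX : X.Finite) : ∃ n, X ⊆ A n := by
  have h : ∀ x : X, ∃ n, (x : M) ∈ A n := by
    intro x
    have : (x : M) ∈ ⋃ n, ((A n : Set M)) := by rw [cover]; trivial
    simpa using this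
  choose ν hν using h
  haveI := hX.fintype
  refine ⟨Finset.univ.sup ν, fun x hx => ?_⟩
  exact mono (Finset.le_sup (Finset.mem_univ (⟨x, hx⟩ : X))) (hν ⟨x, hx⟩)

theorem fg_finite_of_chain {M : Type*} [L.Structure M] {A : ℕ → L.Substructure M}
    (mono : Monotone A) (fin : ∀ n, ((A n : Set M)).Finite)
    (cover : (⋃ n, ((A n : Set M))) = Set.univ)
    {S : L.Substructure M} (hS : S.FG) : (S : Set M).Finite := by
  obtain ⟨X, hX, rfl⟩ := Substructure.fg_def.1 hS
  obtain ⟨n, hn⟩ := finite_subset_chain mono cover hX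
  exact (fin n).subset ((Substructure.closure_le (S := A n)).2 hn)

theorem finite_fg {M : Type*} [L.Structure M] {S : L.Substructure M}
    (h : (S : Set M).Finite) : S.FG :=
  Substructure.fg_def.2 ⟨S, h, Substructure.closure_eq S⟩

theorem finite_emb {A B : Type*} [L.Structure A] [L.Structure B] [Finite A] [Finite B] :
    Finite (A ↪[L] B) :=
  Finite.of_injective (fun f => (f : A → B)) (DFunLike.coe_injective)

theorem emb_range_coe {A M : Type*} [L.Structure A] [L.Structure M] (e : A ↪[L] M) :
    ((e.toHom.range : L.Substructure M) : Set M) = Set.range e := by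
  rw [Hom.range_coe]; ext x; simp

theorem forward (K : Set (Bundled.{0} L.Structure)) (hK : IsAgeClass L K) (hAP : HasAP L K) :
    ∃ M : Bundled.{0} L.Structure, Countable M ∧ Infinite M ∧ IsLocallyFinite L M ∧
      IsUltrahomog L M ∧
      ∀ N : Bundled.{0} L.Structure, (N ∈ K ↔ Finite N ∧ Nonempty (N ↪[L] M)) := by
  classical
  obtain ⟨hfin, hiso, ⟨J, hJc, hJK, hJrep⟩, hunb, hsub, hjep⟩ := hK
  have hJne : J.Nonempty := by
    obtain ⟨N0, hN0, -⟩ := hunb 0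
    obtain ⟨N1, hN1, -⟩ := hJrep N0 hN0
    exact ⟨N1, hN1⟩
  obtain ⟨ρ, hρ⟩ := hJc.exists_eq_range hJne
  have hρK : ∀ i, ρ i ∈ K := fun i => hJK (by rw [hρ]; exact Set.mem_range_self i)
  have hrep : ∀ N ∈ K, ∃ i, Nonempty (ρ i ≃[L] N) := by
    intro N hN
    obtain ⟨N', hN'J, he⟩ := hJrep N hN
    rw [hρ] at hN'J
    obtain ⟨i, rfl⟩ := hN'J
    exact ⟨i, he⟩
  -- one-step saturation by folding over a finite list of tasks
  have fold : ∀ (i j : ℕ) (N : Bundled.{0} L.Structure)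
      (l : List ((ρ i ↪[L] ρ j) × (ρ i ↪[L] N))) (N' : Bundled.{0} L.Structure),
      N' ∈ K → ∀ ι : N ↪[L] N', ∃ P, ∃ _ : P ∈ K, ∃ κ : N' ↪[L] P,
      ∀ t ∈ l, ∃ g : ρ j ↪[L] P, ∀ x, g (t.1 x) = κ (ι (t.2 x)) := by
    intro i j N l
    induction l with
    | nil => exact fun N' hN' ι => ⟨N', hN', Embedding.refl L N', by simp⟩
    | cons t rest ih =>
      intro N' hN' ι
      obtain ⟨D, hD, r, s, hrs⟩ := hAP (ρ i) (hρK i) N' hN' (ρ j) (hρK j) (ι.comp t.2) t.1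
      obtain ⟨P, hP, κ, hκ⟩ := ih D hD (r.comp ι)
      refine ⟨P, hP, κ.comp r, ?_⟩
      rintro u hu
      rcases List.mem_cons.1 hu with h | h
      · subst h
        refine ⟨κ.comp s, fun x => ?_⟩
        have h1 := congrFun (congrArg (DFunLike.coe) hrs) x
        simp only [Embedding.comp_apply] at h1 ⊢
        rw [← h1]
      · obtain ⟨g, hg⟩ := hκ u h
        refine ⟨g, fun x => ?_⟩
        have h1 := hg x
        simp only [Embedding.comp_apply] at h1 ⊢
        rw [h1]
  have step : ∀ (N : Bundled.{0} L.Structure), N ∈ K → ∀ i j : ℕ,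
      ∃ P, ∃ _ : P ∈ K, ∃ ι : N ↪[L] P,
      (∀ (e : ρ i ↪[L] ρ j) (f : ρ i ↪[L] N), ∃ g : ρ j ↪[L] P, ∀ x, g (e x) = ι (f x)) ∧
      Nonempty (ρ i ↪[L] P) := by
    intro N hN i j
    haveI : Finite (ρ i) := hfin _ (hρK i)
    haveI : Finite (ρ j) := hfin _ (hρK j)
    haveI : Finite N := hfin _ hN
    haveI : Finite ((ρ i ↪[L] ρ j) × (ρ i ↪[L] N)) := by
      haveI := finite_emb (L := L) (A := ρ i) (B := ρ j)
      haveI := finite_emb (L := L) (A := ρ i) (B := N)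
      infer_instance
    obtain ⟨l, -, hl⟩ := Finite.exists_univ_list ((ρ i ↪[L] ρ j) × (ρ i ↪[L] N))
    obtain ⟨P, hP, κ, hκ⟩ := fold i j N l N hN (Embedding.refl L N)
    obtain ⟨P', hP', ⟨u⟩, ⟨w⟩⟩ := hjep P hP (ρ i) (hρK i)
    refine ⟨P', hP', u.comp κ, ?_, ⟨w⟩⟩
    intro e f
    obtain ⟨g, hg⟩ := hκ (e, f) (hl _)
    refine ⟨u.comp g, fun x => ?_⟩
    have h1 := hg x
    simp only [Embedding.refl_apply, Embedding.comp_apply] at h1 ⊢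
    rw [h1]
  choose Pf hPf ιf hstep using step
  set σ : ℕ → ℕ × ℕ := fun n => Nat.unpair (Nat.unpair n).2 with hσdef
  have hσ : ∀ i j m : ℕ, ∃ n, m ≤ n ∧ σ n = (i, j) := fun i j m =>
    ⟨Nat.pair m (Nat.pair i j), Nat.left_le_pair _ _, by simp [hσdef, Nat.unpair_pair]⟩
  let G : ℕ → {N : Bundled.{0} L.Structure // N ∈ K} := fun n =>
    Nat.rec ⟨ρ 0, hρK 0⟩
      (fun m Np => ⟨Pf Np.1 Np.2 (σ m).1 (σ m).2, hPf Np.1 Np.2 (σ m).1 (σ m).2⟩) n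
  let Gs : ℕ → Type := fun n => (G n).1
  letI hGstr : ∀ n, L.Structure (Gs n) := fun n => (G n).1.str
  haveI hGfin : ∀ n, Finite (Gs n) := fun n => hfin _ (G n).2
  haveI hGcnt : ∀ n, Countable (Gs n) := fun n => Finite.to_countable
  let h' : ∀ n, Gs n ↪[L] Gs (n + 1) := fun n => ιf (G n).1 (G n).2 (σ n).1 (σ n).2
  let fchain : ∀ i j : ℕ, i ≤ j → Gs i ↪[L] Gs j :=
    fun i j hij => DirectedSystem.natLERec (L := L) (G' := Gs) h' i j hij
  haveI hds : DirectedSystem Gs fun i j h => fchain i j h :=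
    DirectedSystem.natLERec.directedSystem h'
  let Mlim : Type := Language.DirectLimit Gs fchain
  letI hMstr : L.Structure Mlim := inferInstanceAs (L.Structure (Language.DirectLimit Gs fchain))
  haveI hMc : Countable Mlim := by
    have hsurj : Function.Surjective
        (fun p : Σ n, Gs n => DirectLimit.of L ℕ Gs fchain p.1 p.2) := by
      intro z
      obtain ⟨i, x, h⟩ := DirectLimit.exists_of z
      exact ⟨⟨i, x⟩, h⟩
    exact hsurj.countable
  have hsucc : ∀ (n : ℕ) (x : Gs n),
      DirectLimit.of L ℕ Gs fchain (n+1) (h' n x) = DirectLimit.of L ℕ Gs fchain n x := by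
    intro n x
    have h1 : fchain n (n+1) (Nat.le_succ n) x = h' n x := by
      show (DirectedSystem.natLERec (L := L) (G' := Gs) h' n (n+1) (Nat.le_succ n)) x = h' n x
      rw [DirectedSystem.coe_natLERec]
      exact Nat.leRecOn_succ' x
    rw [← h1, DirectLimit.of_f]
  let R : ℕ → L.Substructure Mlim := fun n => (DirectLimit.of L ℕ Gs fchain n).toHom.range
  have hRmono : Monotone R := by
    intro a b hab z hz
    have hz' : z ∈ (DirectLimit.of L ℕ Gs fchain a).toHom.range := hz
    obtain ⟨y, hy⟩ := Hom.mem_range.1 hz'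
    show z ∈ (DirectLimit.of L ℕ Gs fchain b).toHom.range
    refine Hom.mem_range.2 ⟨fchain a b hab y, ?_⟩
    simp only [Embedding.coe_toHom] at hy ⊢
    rw [DirectLimit.of_f, hy]
  have hRfin : ∀ n, ((R n : Set Mlim)).Finite := by
    intro n
    show ((DirectLimit.of L ℕ Gs fchain n).toHom.range : Set Mlim).Finite
    rw [emb_range_coe]
    exact Set.finite_range _
  have hRcover : (⋃ n, ((R n : Set Mlim))) = Set.univ := by
    apply Set.eq_univ_of_forall
    intro z
    obtain ⟨i, x, h⟩ := DirectLimit.exists_of z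
    apply Set.mem_iUnion.2 ⟨i, ?_⟩
    show z ∈ ((DirectLimit.of L ℕ Gs fchain i).toHom.range : Set Mlim)
    rw [emb_range_coe]
    exact ⟨x, h⟩
  -- the age of the limit is K
  have hage : ∀ N : Bundled.{0} L.Structure, N ∈ K ↔ Finite N ∧ Nonempty (N ↪[L] Mlim) := by
    intro N
    constructor
    · intro hN
      refine ⟨hfin N hN, ?_⟩
      obtain ⟨i, ⟨α⟩⟩ := hrep N hN
      obtain ⟨n, -, hσn⟩ := hσ i 0 0
      have h1 : (σ n).1 = i := by rw [hσn]
      subst h1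
      obtain ⟨w⟩ := (hstep (G n).1 (G n).2 (σ n).1 (σ n).2).2
      exact ⟨(DirectLimit.of L ℕ Gs fchain (n+1)).comp
        ((w : ρ (σ n).1 ↪[L] Gs (n+1)).comp α.symm.toEmbedding)⟩
    · rintro ⟨hNf, ⟨emb⟩⟩
      haveI := hNf
      obtain ⟨n, hn⟩ := finite_subset_chain hRmono hRcover (Set.finite_range emb)
      have hmem : ∀ x : N, emb x ∈ R n := fun x => hn (Set.mem_range_self x)
      let f₀ : N ↪[L] Gs n :=
        ((DirectLimit.of L ℕ Gs fchain n).equivRange.symm.toEmbedding).comp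
          (emb.codRestrict (R n) hmem)
      exact hiso _ (hsub (G n).1 (G n).2 f₀.toHom.range) N ⟨f₀.equivRange.symm⟩
  -- extension property
  have ext_prop : ∀ (A B : Bundled.{0} L.Structure), A ∈ K → B ∈ K →
      ∀ (e : A ↪[L] B) (f : A ↪[L] Mlim), ∃ g : B ↪[L] Mlim,
        ∀ a : A, g (e a) = f a := by
    intro A B hA hB e f
    haveI := hfin A hA
    obtain ⟨m, hm⟩ := finite_subset_chain hRmono hRcover (Set.finite_range f)
    have hmem : ∀ x : A, f x ∈ R m := fun x => hm (Set.mem_range_self x)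
    let f₀ : A ↪[L] Gs m :=
      ((DirectLimit.of L ℕ Gs fchain m).equivRange.symm.toEmbedding).comp
        (f.codRestrict (R m) hmem)
    have hfac : ∀ a : A, DirectLimit.of L ℕ Gs fchain m (f₀ a) = f a := by
      intro a
      show DirectLimit.of L ℕ Gs fchain m
        ((DirectLimit.of L ℕ Gs fchain m).equivRange.symm (f.codRestrict (R m) hmem a)) = f a
      rw [← Embedding.equivRange_apply (DirectLimit.of L ℕ Gs fchain m)
        ((DirectLimit.of L ℕ Gs fchain m).equivRange.symm (f.codRestrict (R m) hmem a))]
      rw [Language.Equiv.apply_symm_apply]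
      exact Embedding.codRestrict_apply _ f a
    obtain ⟨i, ⟨α⟩⟩ := hrep A hA
    obtain ⟨j, ⟨β⟩⟩ := hrep B hB
    obtain ⟨n, hmn, hσn⟩ := hσ i j m
    have h1 : (σ n).1 = i := by rw [hσn]
    subst h1
    have h2 : (σ n).2 = j := by rw [hσn]
    subst h2
    let e' : ρ (σ n).1 ↪[L] ρ (σ n).2 := (β.symm.toEmbedding.comp e).comp α.toEmbedding
    let f' : ρ (σ n).1 ↪[L] Gs n := (fchain m n hmn).comp (f₀.comp α.toEmbedding)
    obtain ⟨g', hg'⟩ := (hstep (G n).1 (G n).2 (σ n).1 (σ n).2).1 e' f'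
    refine ⟨(DirectLimit.of L ℕ Gs fchain (n+1)).comp
      ((g' : ρ (σ n).2 ↪[L] Gs (n+1)).comp β.symm.toEmbedding), ?_⟩
    intro a
    have hβ : β.symm (e a) = e' (α.symm a) := by
      show β.symm (e a) = β.symm (e (α (α.symm a)))
      rw [Language.Equiv.apply_symm_apply]
    have hg'a := hg' (α.symm a)
    simp only [Embedding.comp_apply, Language.Equiv.coe_toEmbedding]
    rw [hβ, hg'a]
    have : (ιf (G n).1 (G n).2 (σ n).1 (σ n).2) (f' (α.symm a)) = h' n (f' (α.symm a)) := rfl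
    rw [this, hsucc n]
    show DirectLimit.of L ℕ Gs fchain n ((fchain m n hmn) (f₀ (α (α.symm a)))) = f a
    rw [Language.Equiv.apply_symm_apply, DirectLimit.of_f]
    exact hfac a
  have locfin : IsLocallyFinite L Mlim := ⟨R, hRmono, hRfin, hRcover⟩
  -- extension pairs and ultrahomogeneity
  have hEP : L.IsExtensionPair Mlim Mlim := by
    rintro ⟨φ, φfg⟩ m
    have hdomfin : ((φ.dom : Set Mlim)).Finite := fg_finite_of_chain hRmono hRfin hRcover φfg
    have hSfg : (φ.dom ⊔ Substructure.closure L {m}).FG :=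
      φfg.sup (Substructure.fg_closure_singleton m)
    have hSfin := fg_finite_of_chain hRmono hRfin hRcover hSfg
    let A : Bundled.{0} L.Structure := ⟨φ.dom, inferInstance⟩
    let B : Bundled.{0} L.Structure :=
      ⟨(φ.dom ⊔ Substructure.closure L {m} : L.Substructure Mlim), inferInstance⟩
    have hA : A ∈ K := (hage A).2 ⟨hdomfin.to_subtype, ⟨Substructure.subtype _⟩⟩
    have hB : B ∈ K := (hage B).2 ⟨hSfin.to_subtype, ⟨Substructure.subtype _⟩⟩
    obtain ⟨g, hg⟩ := ext_prop A B hA hB (Substructure.inclusion le_sup_left)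
      ((Substructure.subtype φ.cod).comp φ.toEquiv.toEmbedding)
    refine ⟨⟨⟨_, g.toHom.range, g.equivRange⟩, hSfg⟩,
      Substructure.subset_closure.trans
        (le_sup_right : Substructure.closure L {m} ≤ φ.dom ⊔ Substructure.closure L {m})
        (Set.mem_singleton m), ?_⟩
    refine ⟨le_sup_left, ?_⟩
    ext x
    have hx := hg x
    simp only [Embedding.comp_apply, Language.Equiv.coe_toEmbedding, Substructure.coe_subtype,
      Embedding.equivRange_apply] at hx ⊢
    exact hx
  have uh : L.IsUltrahomogeneous Mlim :=
    (isUltrahomogeneous_iff_IsExtensionPair Structure.cg_of_countable).2 hEP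
  have homog : IsUltrahomog L Mlim := by
    intro S T hS hT f
    obtain ⟨g, hg⟩ := uh S (finite_fg hS) ((Substructure.subtype T).comp f.toEmbedding)
    refine ⟨g, fun x => ?_⟩
    have := congrFun (congrArg (DFunLike.coe) hg) x
    simp only [Embedding.comp_apply, Equiv.coe_toEmbedding, Substructure.coe_subtype] at this
    exact this.symm
  have hInf : Infinite Mlim := by
    rw [← not_finite_iff_infinite]
    intro hfinM
    obtain ⟨N, hN, hcard⟩ := hunb (Nat.card Mlim + 1)
    obtain ⟨hNf, ⟨emb⟩⟩ := (hage N).1 hN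
    have := Nat.card_le_card_of_injective emb emb.injective
    omega
  exact ⟨⟨Mlim, hMstr⟩, hMc, hInf, locfin, homog, hage⟩


theorem finite_structure_fg {N : Type*} [L.Structure N] [Finite N] : Structure.FG L N :=
  Structure.fg_def.2 (finite_fg (Set.toFinite _))

/-- Equivalence between equal substructures. -/
def subEquivOfEq {M : Type*} [L.Structure M] {S T : L.Substructure M} (h : S = T) :
    S ≃[L] T := h ▸ Language.Equiv.refl L S

theorem backward (K : Set (Bundled.{0} L.Structure)) (M : Bundled.{0} L.Structure)
    (hCount : Countable M) (hInf : Infinite M) (hLF : IsLocallyFinite L M)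
    (hUH : IsUltrahomog L M)
    (hchar : ∀ N : Bundled.{0} L.Structure, (N ∈ K ↔ Finite N ∧ Nonempty (N ↪[L] M))) :
    IsAgeClass L K ∧ HasAP L K := by
  classical
  obtain ⟨A, Amono, Afin, Acover⟩ := hLF
  have fgfin : ∀ {S : L.Substructure M}, S.FG → (S : Set M).Finite :=
    fun hS => fg_finite_of_chain Amono Afin Acover hS
  -- mathlib ultrahomogeneity
  have uh : L.IsUltrahomogeneous M := by
    intro S Sfg f
    have hSfin : (S : Set M).Finite := fgfin Sfg
    haveI : Finite S := hSfin.to_subtype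
    have hTfin : ((f.toHom.range : L.Substructure M) : Set M).Finite := by
      rw [emb_range_coe]; exact Set.finite_range _
    obtain ⟨g, hg⟩ := hUH S f.toHom.range hSfin hTfin f.equivRange
    refine ⟨g, ?_⟩
    ext x
    have := hg x
    simp only [Embedding.equivRange_apply] at this
    simp [this]
  -- identification with the age
  have hKage : K = L.age M := by
    ext N
    rw [hchar N]
    constructor
    · rintro ⟨hNf, ⟨e⟩⟩
      exact ⟨@finite_structure_fg _ _ _ hNf, ⟨e⟩⟩
    · rintro ⟨hfg, ⟨e⟩⟩
      have hr : ((e.toHom.range : L.Substructure M) : Set M).Finite :=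
        fgfin (hfg.range e.toHom)
      haveI : Finite ↥(e.toHom.range) := hr.to_subtype
      exact ⟨Finite.of_equiv _ e.equivRange.symm.toEquiv, ⟨e⟩⟩
  constructor
  · refine ⟨fun N hN => ((hchar N).1 hN).1, ?_, ?_, ?_, ?_, ?_⟩
    · rintro N hN N' ⟨eqv⟩
      obtain ⟨hNf, ⟨e⟩⟩ := (hchar N).1 hN
      exact (hchar N').2 ⟨@Finite.of_equiv _ _ hNf eqv.toEquiv, ⟨e.comp eqv.symm.toEmbedding⟩⟩
    · -- essential countability
      set F : Finset M → Bundled.{0} L.Structure :=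
        fun s => ⟨Substructure.closure L (s : Set M), inferInstance⟩ with hF
      refine ⟨F '' {s | F s ∈ K}, (Set.to_countable _).image F, ?_, ?_⟩
      · rintro _ ⟨s, hs, rfl⟩; exact hs
      · intro N hN
        obtain ⟨hNf, ⟨e⟩⟩ := (hchar N).1 hN
        haveI := hNf
        have hfin : (Set.range e).Finite := Set.finite_range _
        have hset : Substructure.closure L ((hfin.toFinset : Finset M) : Set M) = e.toHom.range := by
          apply le_antisymm
          · rw [Substructure.closure_le, emb_range_coe]
            intro x hx
            simpa using hx
          · intro x hx
            apply Substructure.subset_closure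
            rw [Hom.mem_range] at hx
            obtain ⟨y, hy⟩ := hx
            simp only [Set.Finite.coe_toFinset]
            exact ⟨y, by simpa using hy⟩
        have equiv : F hfin.toFinset ≃[L] N :=
          Language.Equiv.comp e.equivRange.symm (subEquivOfEq hset)
        have hmem : F hfin.toFinset ∈ K := by
          refine (hchar _).2 ⟨?_, ⟨Substructure.subtype _⟩⟩
          have : ((Substructure.closure L ((hfin.toFinset : Finset M) : Set M)) :
              Set M).Finite := by
            rw [hset, emb_range_coe]; exact hfin
          exact this.to_subtype
        exact ⟨F hfin.toFinset, ⟨hfin.toFinset, hmem, rfl⟩, ⟨equiv⟩⟩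
    · -- unbounded sizes
      intro n
      obtain ⟨s, hs⟩ := Infinite.exists_subset_card_eq M n
      obtain ⟨k, hk⟩ := finite_subset_chain Amono Acover s.finite_toSet
      have hfin : ((Substructure.closure L (s : Set M)) : Set M).Finite :=
        (Afin k).subset ((Substructure.closure_le (S := A k)).2 hk)
      refine ⟨⟨Substructure.closure L (s : Set M), inferInstance⟩,
        (hchar _).2 ⟨hfin.to_subtype, ⟨Substructure.subtype _⟩⟩, ?_⟩
      have h1 : (s : Set M).ncard ≤ ((Substructure.closure L (s : Set M)) : Set M).ncard :=
        Set.ncard_le_ncard Substructure.subset_closure hfin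
      rw [Set.ncard_coe_finset, hs] at h1
      calc n ≤ ((Substructure.closure L (s : Set M)) : Set M).ncard := h1
        _ = Nat.card ↥(Substructure.closure L (s : Set M)) :=
            (Nat.card_coe_set_eq _).symm
    · -- hereditary
      intro N hN S
      obtain ⟨hNf, ⟨e⟩⟩ := (hchar N).1 hN
      haveI := hNf
      exact (hchar _).2 ⟨inferInstance, ⟨e.comp S.subtype⟩⟩
    · -- JEP
      intro N hN N' hN'
      obtain ⟨hNf, ⟨e⟩⟩ := (hchar N).1 hN
      obtain ⟨hNf', ⟨e'⟩⟩ := (hchar N').1 hN'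
      haveI := hNf; haveI := hNf'
      have hfin : (Set.range e ∪ Set.range e').Finite :=
        (Set.finite_range _).union (Set.finite_range _)
      obtain ⟨k, hk⟩ := finite_subset_chain Amono Acover hfin
      have h1 : e.toHom.range ≤ A k := by
        rw [← SetLike.coe_subset_coe, emb_range_coe]
        exact (Set.subset_union_left).trans hk
      have h2 : e'.toHom.range ≤ A k := by
        rw [← SetLike.coe_subset_coe, emb_range_coe]
        exact (Set.subset_union_right).trans hk
      have hP : ((e.toHom.range ⊔ e'.toHom.range : L.Substructure M) : Set M).Finite :=
        (Afin k).subset (SetLike.coe_subset_coe.2 (sup_le h1 h2))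
      refine ⟨⟨(e.toHom.range ⊔ e'.toHom.range : L.Substructure M), inferInstance⟩,
        (hchar _).2 ⟨hP.to_subtype, ⟨Substructure.subtype _⟩⟩,
        ⟨(Substructure.inclusion le_sup_left).comp e.equivRange.toEmbedding⟩,
        ⟨(Substructure.inclusion le_sup_right).comp e'.equivRange.toEmbedding⟩⟩
  · -- HasAP
    intro A' hA B hB C hC f g
    obtain ⟨Q, NQ, PQ, hQ, hcomm⟩ := uh.amalgamation_age A' B C f g
      (by rw [hKage] at hA; exact hA) (by rw [hKage] at hB; exact hB)
      (by rw [hKage] at hC; exact hC)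
    exact ⟨Q, by rw [hKage]; exact hQ, NQ, PQ, hcomm⟩
end FraisseAux


/-- A class of finite structures is a Fraïssé class (an age class with the amalgamation
property) iff it is the age of a Fraïssé structure (a countably infinite, locally
finite, ultrahomogeneous structure). -/
theorem isFraisseClass_iff_age_of_fraisseStructure
    (L : FirstOrder.Language.{u, v}) (K : Set (Bundled.{0} L.Structure)) :
    (IsAgeClass L K ∧ HasAP L K) ↔
      ∃ M : Bundled.{0} L.Structure, Countable M ∧ Infinite M ∧ IsLocallyFinite L M ∧
        IsUltrahomog L M ∧
        ∀ N : Bundled.{0} L.Structure, (N ∈ K ↔ Finite N ∧ Nonempty (N ↪[L] M)) := by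
  constructor
  · rintro ⟨hK, hAP⟩
    exact FraisseAux.forward K hK hAP
  · rintro ⟨M, hc, hi, hlf, huh, hchar⟩
    exact FraisseAux.backward K M hc hi hlf huh hchar
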